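/- Let K*_{n1,n2}(·;q1,q2;x,y) be the bivariate Dunkl q-Szász-Mirakjan-Kantorovich-Stancu operator. Then for all n1,n2 ∈ ℕ⁺, 0<q1,q2<1, μ1,μ2>1/2, α1,α2,β1,β2 ≥ 0 and x,y ≥ 0, applying the operator to the test function e_{1,0}(u,v)=u gives K*_{n1,n2}(e_{1,0};q1,q2;x,y) = (n1/(n1+β1))·(α1/n1 + 1/([2]_{q1}[n1]_{q1})) + (2n1·q1/([2]_{q1}(n1+β1)))·x. -/

import Mathlib

/-- The `q`-number `[x]_q = (1 - q^x)/(1 - q)` for a real exponent `x`. -/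
noncomputable def qNum (q x : ℝ) : ℝ := (1 - q ^ x) / (1 - q)

/-- `θ_k = 0` if `k` is even and `1` if `k` is odd. -/
def theta (k : ℕ) : ℕ := if Even k then 0 else 1

/-- The Dunkl `q`-gamma coefficients: `γ_{μ,q}(0) = 1`,
`γ_{μ,q}(k+1) = [2μθ_{k+1} + k + 1]_q ⬝ γ_{μ,q}(k)`. -/
noncomputable def gammaD (mu q : ℝ) : ℕ → ℝ
  | 0 => 1
  | k + 1 => qNum q (2 * mu * (theta (k + 1) : ℝ) + ((k : ℝ) + 1)) * gammaD mu q k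

/-- The Dunkl `q`-exponential `E_{μ,q}(x) = Σ q^{k(k-1)/2} x^k / γ_{μ,q}(k)`. -/
noncomputable def EDunkl (mu q x : ℝ) : ℝ :=
  ∑' k : ℕ, q ^ (k * (k - 1) / 2) * x ^ k / gammaD mu q k

/-- The Jackson `q`-integral `∫_a^b f(t) d_q t`. -/
noncomputable def jacksonInt (q : ℝ) (f : ℝ → ℝ) (a b : ℝ) : ℝ :=
  (1 - q) * (b * ∑' j : ℕ, q ^ j * f (b * q ^ j) - a * ∑' j : ℕ, q ^ j * f (a * q ^ j))

/-- Lower endpoint `[k + 2μθ_k]_q / (q^{k-2} [n]_q)`. -/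
noncomputable def lowB (q mu : ℝ) (n k : ℕ) : ℝ :=
  qNum q ((k : ℝ) + 2 * mu * (theta k : ℝ)) / (q ^ ((k : ℝ) - 2) * qNum q (n : ℝ))

/-- Upper endpoint `([k + 1 + 2μθ_k]_q - 1) / (q^{k-1} [n]_q) + 1/[n]_q`. -/
noncomputable def uppB (q mu : ℝ) (n k : ℕ) : ℝ :=
  (qNum q ((k : ℝ) + 1 + 2 * mu * (theta k : ℝ)) - 1) / (q ^ ((k : ℝ) - 1) * qNum q (n : ℝ))
    + 1 / qNum q (n : ℝ)

/-- The Dunkl `q`-Szász-Mirakjan-Kantorovich-Stancu operator `K̃_{n,q}(f;x)`. -/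
noncomputable def KT (n : ℕ) (q mu α β : ℝ) (f : ℝ → ℝ) (x : ℝ) : ℝ :=
  qNum q (n : ℝ) / EDunkl mu q (qNum q (n : ℝ) * x) *
    ∑' k : ℕ, (qNum q (n : ℝ) * x) ^ k / gammaD mu q k * q ^ (k * (k - 1) / 2) *
      jacksonInt q (fun t => f (((n : ℝ) * t + α) / ((n : ℝ) + β))) (lowB q mu n k) (uppB q mu n k)

/-- The bivariate Dunkl `q`-Szász-Mirakjan-Kantorovich-Stancu operator
`K*_{n₁,n₂}(f; q₁, q₂; x, y)`. -/
noncomputable def KB (n₁ n₂ : ℕ) (q₁ q₂ mu₁ mu₂ α₁ α₂ β₁ β₂ : ℝ) (f : ℝ → ℝ → ℝ)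
    (x y : ℝ) : ℝ :=
  qNum q₁ (n₁ : ℝ) * qNum q₂ (n₂ : ℝ) /
      (EDunkl mu₁ q₁ (qNum q₁ (n₁ : ℝ) * x) * EDunkl mu₂ q₂ (qNum q₂ (n₂ : ℝ) * y)) *
    ∑' k₁ : ℕ, ∑' k₂ : ℕ,
      (qNum q₁ (n₁ : ℝ) * x) ^ k₁ / gammaD mu₁ q₁ k₁ *
        ((qNum q₂ (n₂ : ℝ) * y) ^ k₂ / gammaD mu₂ q₂ k₂) *
        q₁ ^ (k₁ * (k₁ - 1) / 2) * q₂ ^ (k₂ * (k₂ - 1) / 2) *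
        jacksonInt q₂ (fun t =>
            jacksonInt q₁ (fun s =>
                f (((n₁ : ℝ) * s + α₁) / ((n₁ : ℝ) + β₁)) (((n₂ : ℝ) * t + α₂) / ((n₂ : ℝ) + β₂)))
              (lowB q₁ mu₁ n₁ k₁) (uppB q₁ mu₁ n₁ k₁))
          (lowB q₂ mu₂ n₂ k₂) (uppB q₂ mu₂ n₂ k₂)

-- helpers
lemma tri (k : ℕ) : (k+1)*k/2 = k*(k-1)/2 + k := by
  have h3 : (k+1)*k = k*(k-1) + 2*k := by cases k with
    | zero => rfl
    | succ j => simp [Nat.succ_sub_one]; ring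
  have h1 : 2 ∣ k*(k-1) := by
    rcases Nat.even_or_odd k with h | h
    · exact Dvd.dvd.mul_right h.two_dvd _
    · cases k with
      | zero => simp
      | succ j => exact Dvd.dvd.mul_left (Nat.Odd.sub_odd h odd_one).two_dvd _
  omega

lemma qNum_zero (q : ℝ) : qNum q 0 = 0 := by simp [qNum]

lemma qNum_pos {q : ℝ} (hq0 : 0 < q) (hq1 : q < 1) {t : ℝ} (ht : 0 < t) : 0 < qNum q t :=
  div_pos (by have := Real.rpow_lt_one hq0.le hq1 ht; linarith) (by linarith)

lemma qNum_succ {q : ℝ} (hq0 : 0 < q) (hq1 : q < 1) (t : ℝ) :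
    qNum q (t + 1) = 1 + q * qNum q t := by
  unfold qNum
  rw [Real.rpow_add hq0, Real.rpow_one]
  have h : (1:ℝ) - q ≠ 0 := by linarith
  field_simp
  ring

lemma qNum_two {q : ℝ} (hq0 : 0 < q) (hq1 : q < 1) : qNum q 2 = 1 + q := by
  have := qNum_succ hq0 hq1 1
  have h1 : qNum q 1 = 1 := by
    unfold qNum
    rw [Real.rpow_one]
    exact div_self (by linarith)
  norm_num at this
  rw [this, h1, mul_one]

lemma qNum_ge_one {q : ℝ} (hq0 : 0 < q) (hq1 : q < 1) {t : ℝ} (ht : 1 ≤ t) :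
    1 ≤ qNum q t := by
  have h : q ^ t ≤ q ^ (1:ℝ) := Real.rpow_le_rpow_of_exponent_ge hq0 hq1.le ht
  rw [Real.rpow_one] at h
  rw [qNum, le_div_iff₀ (by linarith)]
  linarith

lemma theta_nonneg (k : ℕ) : (0:ℝ) ≤ (theta k : ℝ) := Nat.cast_nonneg _

lemma gammaD_pos {mu q : ℝ} (hq0 : 0 < q) (hq1 : q < 1) (hmu : 1/2 < mu) (k : ℕ) :
    0 < gammaD mu q k := by
  induction k with
  | zero => norm_num [gammaD]
  | succ j ih =>
    rw [gammaD]
    refine mul_pos (qNum_pos hq0 hq1 ?_) ih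
    have h1 : (0:ℝ) ≤ 2 * mu * (theta (j+1) : ℝ) :=
      mul_nonneg (by linarith) (theta_nonneg _)
    have h2 : (0:ℝ) ≤ (j:ℝ) := Nat.cast_nonneg _
    linarith

noncomputable def Eterm (mu q z : ℝ) (k : ℕ) : ℝ := q ^ (k * (k - 1) / 2) * z ^ k / gammaD mu q k

lemma EDunkl_eq (mu q z : ℝ) : EDunkl mu q z = ∑' k, Eterm mu q z k := rfl

lemma Eterm_nonneg {mu q z : ℝ} (hq0 : 0 < q) (hq1 : q < 1) (hmu : 1/2 < mu) (hz : 0 ≤ z)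
    (k : ℕ) : 0 ≤ Eterm mu q z k :=
  div_nonneg (mul_nonneg (pow_nonneg hq0.le _) (pow_nonneg hz _)) (gammaD_pos hq0 hq1 hmu k).le

lemma Eterm_succ {mu q z : ℝ} (hq0 : 0 < q) (hq1 : q < 1) (hmu : 1/2 < mu) (k : ℕ) :
    Eterm mu q z (k+1) =
      Eterm mu q z k * (q ^ k * z / qNum q (2 * mu * (theta (k + 1) : ℝ) + ((k : ℝ) + 1))) := by
  have hD : qNum q (2 * mu * (theta (k + 1) : ℝ) + ((k : ℝ) + 1)) ≠ 0 := by
    refine (qNum_pos hq0 hq1 ?_).ne'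
    have h1 : (0:ℝ) ≤ 2 * mu * (theta (k+1) : ℝ) := mul_nonneg (by linarith) (theta_nonneg _)
    have h2 : (0:ℝ) ≤ (k:ℝ) := Nat.cast_nonneg _
    linarith
  have hG : gammaD mu q k ≠ 0 := (gammaD_pos hq0 hq1 hmu k).ne'
  rw [Eterm, Eterm, gammaD, Nat.add_sub_cancel, tri, pow_add]
  field_simp
  ring

lemma summable_Eterm {mu q z : ℝ} (hq0 : 0 < q) (hq1 : q < 1) (hmu : 1/2 < mu) (hz : 0 ≤ z) :
    Summable (Eterm mu q z) := by
  apply summable_of_ratio_norm_eventually_le (r := 1/2) (by norm_num)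
  have htend : Filter.Tendsto (fun k : ℕ => q ^ k * z) Filter.atTop (nhds 0) := by
    simpa using (tendsto_pow_atTop_nhds_zero_of_lt_one hq0.le hq1).mul_const z
  filter_upwards [htend.eventually_lt_const (by norm_num : (0:ℝ) < 1/2)] with k hk
  have h0 := Eterm_nonneg hq0 hq1 hmu hz (z := z) k
  have h1 := Eterm_nonneg hq0 hq1 hmu hz (z := z) (k+1)
  rw [Real.norm_of_nonneg h1, Real.norm_of_nonneg h0, Eterm_succ hq0 hq1 hmu]
  have hD : 1 ≤ qNum q (2 * mu * (theta (k + 1) : ℝ) + ((k : ℝ) + 1)) := by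
    refine qNum_ge_one hq0 hq1 ?_
    have h1 : (0:ℝ) ≤ 2 * mu * (theta (k+1) : ℝ) := mul_nonneg (by linarith) (theta_nonneg _)
    have h2 : (0:ℝ) ≤ (k:ℝ) := Nat.cast_nonneg _
    linarith
  have hr : q ^ k * z / qNum q (2 * mu * (theta (k + 1) : ℝ) + ((k : ℝ) + 1)) ≤ q ^ k * z := by
    refine div_le_self (mul_nonneg (pow_nonneg hq0.le _) hz) hD
  calc Eterm mu q z k * (q ^ k * z / qNum q (2 * mu * (theta (k + 1) : ℝ) + ((k : ℝ) + 1)))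
      ≤ Eterm mu q z k * (q ^ k * z) := by
        exact mul_le_mul_of_nonneg_left hr h0
    _ ≤ 1/2 * Eterm mu q z k := by
        rw [mul_comm]
        exact mul_le_mul_of_nonneg_right hk.le h0
section H2
variable {q mu : ℝ}

lemma one_le_EDunkl {z : ℝ} (hq0 : 0 < q) (hq1 : q < 1) (hmu : 1/2 < mu) (hz : 0 ≤ z) :
    1 ≤ EDunkl mu q z := by
  rw [EDunkl_eq]
  have h0 : Eterm mu q z 0 = 1 := by simp [Eterm, gammaD]
  calc (1:ℝ) = Eterm mu q z 0 := h0.symm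
    _ ≤ ∑' k, Eterm mu q z k :=
        Summable.le_tsum (summable_Eterm hq0 hq1 hmu hz) 0 (fun j _ => Eterm_nonneg hq0 hq1 hmu hz j)

lemma jacksonInt_linear (hq0 : 0 < q) (hq1 : q < 1) (p r a b : ℝ) :
    jacksonInt q (fun t => p * t + r) a b = p * (b^2 - a^2) / (1 + q) + r * (b - a) := by
  have hq : (1:ℝ) - q ≠ 0 := by linarith
  have hq2 : (1:ℝ) + q ≠ 0 := by linarith
  have hqq : (0:ℝ) ≤ q * q := mul_nonneg hq0.le hq0.le
  have hqq1 : q * q < 1 := by nlinarith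
  have hgeo : ∀ c : ℝ, ∑' j : ℕ, q ^ j * (p * (c * q ^ j) + r)
      = p * c * (1 - q * q)⁻¹ + r * (1 - q)⁻¹ := by
    intro c
    have heq : (fun j : ℕ => q ^ j * (p * (c * q ^ j) + r))
        = fun j : ℕ => p * c * (q * q) ^ j + r * q ^ j := by
      funext j
      rw [mul_pow]
      ring
    rw [heq, Summable.tsum_add (((summable_geometric_of_lt_one hqq hqq1).mul_left _))
      ((summable_geometric_of_lt_one hq0.le hq1).mul_left _), tsum_mul_left, tsum_mul_left,
      tsum_geometric_of_lt_one hqq hqq1, tsum_geometric_of_lt_one hq0.le hq1]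
  unfold jacksonInt
  rw [hgeo a, hgeo b]
  have h2 : (1:ℝ) - q * q ≠ 0 := by nlinarith
  have h2' : (1:ℝ) - q ^ 2 ≠ 0 := by nlinarith
  field_simp
  ring

lemma jacksonInt_const (hq0 : 0 < q) (hq1 : q < 1) (c a b : ℝ) :
    jacksonInt q (fun _ => c) a b = c * (b - a) := by
  have h := jacksonInt_linear hq0 hq1 0 c a b
  simp only [zero_mul, zero_add, zero_div] at h
  rw [← h]

lemma lowB_zero (q mu : ℝ) (n : ℕ) : lowB q mu n 0 = 0 := by
  simp [lowB, theta, qNum_zero]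

lemma uppB_eq (hq0 : 0 < q) (hq1 : q < 1) {n : ℕ} (hn : 0 < n) (k : ℕ) :
    uppB q mu n k = lowB q mu n k + 1 / qNum q (n : ℝ) := by
  unfold uppB lowB
  have harg : (k:ℝ) + 1 + 2 * mu * (theta k : ℝ) = ((k:ℝ) + 2 * mu * (theta k : ℝ)) + 1 := by
    ring
  rw [harg, qNum_succ hq0 hq1, add_sub_cancel_left]
  have hr : q ^ ((k:ℝ) - 1) = q ^ ((k:ℝ) - 2) * q := by
    rw [show (k:ℝ) - 1 = ((k:ℝ) - 2) + 1 by ring, Real.rpow_add hq0, Real.rpow_one]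
  rw [hr]
  have hp : q ^ ((k:ℝ) - 2) ≠ 0 := (Real.rpow_pos_of_pos hq0 _).ne'
  have hN : qNum q (n : ℝ) ≠ 0 :=
    (qNum_pos hq0 hq1 (by exact_mod_cast hn : (0:ℝ) < (n:ℝ))).ne'
  congr 1
  field_simp

end H2
section H3
variable {q mu : ℝ}

lemma Eterm_lowB_succ (hq0 : 0 < q) (hq1 : q < 1) (hmu : 1/2 < mu) {n : ℕ} (hn : 0 < n)
    {z : ℝ} (k : ℕ) :
    Eterm mu q z (k+1) * lowB q mu n (k+1)
      = (q * z / qNum q (n : ℝ)) * Eterm mu q z k := by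
  have hD : 0 < qNum q (2 * mu * (theta (k + 1) : ℝ) + ((k : ℝ) + 1)) := by
    refine qNum_pos hq0 hq1 ?_
    have h1 : (0:ℝ) ≤ 2 * mu * (theta (k+1) : ℝ) := mul_nonneg (by linarith) (theta_nonneg _)
    have h2 : (0:ℝ) ≤ (k:ℝ) := Nat.cast_nonneg _
    linarith
  have hN : qNum q (n : ℝ) ≠ 0 :=
    (qNum_pos hq0 hq1 (by exact_mod_cast hn : (0:ℝ) < (n:ℝ))).ne'
  have harg : ((k+1:ℕ):ℝ) + 2 * mu * (theta (k+1) : ℝ)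
      = 2 * mu * (theta (k + 1) : ℝ) + ((k : ℝ) + 1) := by push_cast; ring
  have hrp : q ^ (((k+1:ℕ):ℝ) - 2) = q ^ k / q := by
    push_cast
    rw [show (k:ℝ) + 1 - 2 = (k:ℝ) + (-1) by ring, Real.rpow_add hq0, Real.rpow_natCast,
      Real.rpow_neg_one]
    rfl
  rw [Eterm_succ hq0 hq1 hmu, lowB, harg, hrp]
  have hqk : q ^ k ≠ 0 := pow_ne_zero _ hq0.ne'
  field_simp

lemma summable_Eterm_lowB (hq0 : 0 < q) (hq1 : q < 1) (hmu : 1/2 < mu) {n : ℕ} (hn : 0 < n)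
    {z : ℝ} (hz : 0 ≤ z) :
    Summable (fun k => Eterm mu q z k * lowB q mu n k) := by
  refine (summable_nat_add_iff 1).1 ?_
  have heq : (fun k : ℕ => Eterm mu q z (k+1) * lowB q mu n (k+1))
      = fun k : ℕ => (q * z / qNum q (n : ℝ)) * Eterm mu q z k :=
    funext (Eterm_lowB_succ hq0 hq1 hmu hn)
  rw [heq]
  exact (summable_Eterm hq0 hq1 hmu hz).mul_left _

lemma tsum_Eterm_lowB (hq0 : 0 < q) (hq1 : q < 1) (hmu : 1/2 < mu) {n : ℕ} (hn : 0 < n)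
    {z : ℝ} (hz : 0 ≤ z) :
    ∑' k, Eterm mu q z k * lowB q mu n k
      = q * z / qNum q (n : ℝ) * EDunkl mu q z := by
  rw [Summable.tsum_eq_zero_add (summable_Eterm_lowB hq0 hq1 hmu hn hz), lowB_zero, mul_zero, zero_add]
  rw [tsum_congr (fun k => Eterm_lowB_succ hq0 hq1 hmu hn (z := z) k), tsum_mul_left,
    EDunkl_eq]

end H3

/-- `K*_{n₁,n₂}(e_{1,0}; q₁, q₂; x, y)
  = (n₁/(n₁+β₁))(α₁/n₁ + 1/([2]_{q₁}[n₁]_{q₁})) + (2n₁q₁/([2]_{q₁}(n₁+β₁))) x`. -/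
theorem KB_e10 (n₁ n₂ : ℕ) (hn₁ : 0 < n₁) (hn₂ : 0 < n₂)
    (q₁ q₂ mu₁ mu₂ α₁ α₂ β₁ β₂ x y : ℝ)
    (hq₁0 : 0 < q₁) (hq₁1 : q₁ < 1) (hq₂0 : 0 < q₂) (hq₂1 : q₂ < 1)
    (hmu₁ : 1 / 2 < mu₁) (hmu₂ : 1 / 2 < mu₂)
    (hα₁ : 0 ≤ α₁) (hα₂ : 0 ≤ α₂) (hβ₁ : 0 ≤ β₁) (hβ₂ : 0 ≤ β₂)
    (hx : 0 ≤ x) (hy : 0 ≤ y) :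
    KB n₁ n₂ q₁ q₂ mu₁ mu₂ α₁ α₂ β₁ β₂ (fun u _ => u) x y =
      (n₁ : ℝ) / ((n₁ : ℝ) + β₁) * (α₁ / (n₁ : ℝ) + 1 / (qNum q₁ 2 * qNum q₁ (n₁ : ℝ)))
        + 2 * (n₁ : ℝ) * q₁ / (qNum q₁ 2 * ((n₁ : ℝ) + β₁)) * x := by
  have hn₁R : (0:ℝ) < (n₁:ℝ) := by exact_mod_cast hn₁
  have hn₂R : (0:ℝ) < (n₂:ℝ) := by exact_mod_cast hn₂
  have hN₁ : 0 < qNum q₁ (n₁:ℝ) := qNum_pos hq₁0 hq₁1 hn₁R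
  have hN₂ : 0 < qNum q₂ (n₂:ℝ) := qNum_pos hq₂0 hq₂1 hn₂R
  have hz₁ : 0 ≤ qNum q₁ (n₁:ℝ) * x := mul_nonneg hN₁.le hx
  have hz₂ : 0 ≤ qNum q₂ (n₂:ℝ) * y := mul_nonneg hN₂.le hy
  have hE₁ : 0 < EDunkl mu₁ q₁ (qNum q₁ (n₁:ℝ) * x) :=
    lt_of_lt_of_le one_pos (one_le_EDunkl hq₁0 hq₁1 hmu₁ hz₁)
  have hE₂ : 0 < EDunkl mu₂ q₂ (qNum q₂ (n₂:ℝ) * y) :=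
    lt_of_lt_of_le one_pos (one_le_EDunkl hq₂0 hq₂1 hmu₂ hz₂)
  have h1q₁ : (0:ℝ) < 1 + q₁ := by linarith
  have hnb₁ : (0:ℝ) < (n₁:ℝ) + β₁ := by linarith
  set c₂ : ℝ := 2 * (n₁:ℝ) / (((n₁:ℝ) + β₁) * (1 + q₁) * qNum q₁ (n₁:ℝ)) with hc₂
  set c₁ : ℝ := (n₁:ℝ) / (((n₁:ℝ) + β₁) * (1 + q₁) * qNum q₁ (n₁:ℝ)^2)
      + α₁ / (((n₁:ℝ) + β₁) * qNum q₁ (n₁:ℝ)) with hc₁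
  have hJ1 : ∀ k : ℕ, jacksonInt q₁ (fun s => ((n₁:ℝ) * s + α₁) / ((n₁:ℝ) + β₁))
      (lowB q₁ mu₁ n₁ k) (uppB q₁ mu₁ n₁ k) = c₁ + c₂ * lowB q₁ mu₁ n₁ k := by
    intro k
    have hf : (fun s => ((n₁:ℝ) * s + α₁) / ((n₁:ℝ) + β₁))
        = fun s => ((n₁:ℝ) / ((n₁:ℝ) + β₁)) * s + α₁ / ((n₁:ℝ) + β₁) := by
      funext s
      field_simp
    rw [hf, jacksonInt_linear hq₁0 hq₁1, uppB_eq hq₁0 hq₁1 hn₁, hc₁, hc₂]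
    field_simp
    ring
  have hJ2 : ∀ (c : ℝ) (k : ℕ), jacksonInt q₂ (fun _ => c)
      (lowB q₂ mu₂ n₂ k) (uppB q₂ mu₂ n₂ k) = c / qNum q₂ (n₂:ℝ) := by
    intro c k
    rw [jacksonInt_const hq₂0 hq₂1, uppB_eq hq₂0 hq₂1 hn₂]
    ring
  simp only [KB]
  simp only [hJ1]
  simp only [hJ2]
  have hinner : ∀ k₁ : ℕ,
      (∑' k₂ : ℕ, (qNum q₁ (n₁:ℝ) * x) ^ k₁ / gammaD mu₁ q₁ k₁ *
        ((qNum q₂ (n₂:ℝ) * y) ^ k₂ / gammaD mu₂ q₂ k₂) *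
        q₁ ^ (k₁ * (k₁ - 1) / 2) * q₂ ^ (k₂ * (k₂ - 1) / 2) *
        ((c₁ + c₂ * lowB q₁ mu₁ n₁ k₁) / qNum q₂ (n₂:ℝ)))
      = (Eterm mu₁ q₁ (qNum q₁ (n₁:ℝ) * x) k₁ * (c₁ + c₂ * lowB q₁ mu₁ n₁ k₁))
          * (EDunkl mu₂ q₂ (qNum q₂ (n₂:ℝ) * y) / qNum q₂ (n₂:ℝ)) := by
    intro k₁
    have hfe : (fun k₂ : ℕ => (qNum q₁ (n₁:ℝ) * x) ^ k₁ / gammaD mu₁ q₁ k₁ *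
        ((qNum q₂ (n₂:ℝ) * y) ^ k₂ / gammaD mu₂ q₂ k₂) *
        q₁ ^ (k₁ * (k₁ - 1) / 2) * q₂ ^ (k₂ * (k₂ - 1) / 2) *
        ((c₁ + c₂ * lowB q₁ mu₁ n₁ k₁) / qNum q₂ (n₂:ℝ)))
        = fun k₂ : ℕ => (Eterm mu₁ q₁ (qNum q₁ (n₁:ℝ) * x) k₁ *
            (c₁ + c₂ * lowB q₁ mu₁ n₁ k₁) / qNum q₂ (n₂:ℝ))
            * Eterm mu₂ q₂ (qNum q₂ (n₂:ℝ) * y) k₂ := by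
      funext k₂
      simp only [Eterm]
      ring
    rw [hfe, tsum_mul_left, EDunkl_eq]
    ring
  rw [tsum_congr hinner, tsum_mul_right]
  have houter : (fun k : ℕ => Eterm mu₁ q₁ (qNum q₁ (n₁:ℝ) * x) k * (c₁ + c₂ * lowB q₁ mu₁ n₁ k))
      = fun k : ℕ => c₁ * Eterm mu₁ q₁ (qNum q₁ (n₁:ℝ) * x) k
          + c₂ * (Eterm mu₁ q₁ (qNum q₁ (n₁:ℝ) * x) k * lowB q₁ mu₁ n₁ k) := by
    funext k
    ring
  rw [houter, Summable.tsum_add ((summable_Eterm hq₁0 hq₁1 hmu₁ hz₁).mul_left c₁)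
      ((summable_Eterm_lowB hq₁0 hq₁1 hmu₁ hn₁ hz₁).mul_left c₂),
    tsum_mul_left, tsum_mul_left, tsum_Eterm_lowB hq₁0 hq₁1 hmu₁ hn₁ hz₁, ← EDunkl_eq,
    qNum_two hq₁0 hq₁1, hc₁, hc₂]
  field_simp
  ring
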